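/- Every graph on n vertices with no triangle has at most n²/4 edges. -/

import Mathlib

open Finset SimpleGraph

lemma parity_count (n : ℕ) :
    #((Finset.range n).filter (fun x => x % 2 = 0)) = (n + 1) / 2 ∧
    #((Finset.range n).filter (fun x => x % 2 = 1)) = n / 2 := by
  induction n with
  | zero => simp
  | succ n ih =>
    rw [Finset.range_add_one, Finset.filter_insert, Finset.filter_insert]
    rcases Nat.even_or_odd n with h | h
    · have h0 : n % 2 = 0 := Nat.even_iff.mp h
      rw [if_pos h0, if_neg (by omega), Finset.card_insert_of_notMem (by simp)]
      omega
    · have h1 : n % 2 = 1 := Nat.odd_iff.mp h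
      rw [if_neg (by omega), if_pos h1, Finset.card_insert_of_notMem (by simp)]
      omega

lemma fin_parity_count (n : ℕ) (k : ℕ) :
    #((Finset.univ : Finset (Fin n)).filter (fun x => x.val % 2 = k)) =
    #((Finset.range n).filter (fun x => x % 2 = k)) := by
  refine Finset.card_bij (fun a _ => a.val) ?_ ?_ ?_
  · intro a ha
    simp only [Finset.mem_filter, Finset.mem_range, Finset.mem_univ, true_and] at ha ⊢
    exact ⟨a.2, ha⟩
  · intro a _ b _ h; exact Fin.ext h
  · intro b hb; simp at hb; exact ⟨⟨b, hb.1⟩, by simp [hb.2], rfl⟩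

lemma turan2_degree (n : ℕ) (v : Fin n) :
    (turanGraph n 2).degree v =
      if v.val % 2 = 0 then n / 2 else (n + 1) / 2 := by
  classical
  rw [SimpleGraph.degree, SimpleGraph.neighborFinset_eq_filter]
  have hadj : ∀ w : Fin n, (turanGraph n 2).Adj v w ↔ ¬ (w.val % 2 = v.val % 2) := by
    intro w
    simp only [turanGraph, ne_eq]
    constructor
    · intro h hc; exact h (by omega)
    · intro h hc; exact h (by omega)
  rcases Nat.even_or_odd v.val with h | h
  · have h0 : v.val % 2 = 0 := Nat.even_iff.mp h
    rw [if_pos h0]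
    have : (Finset.univ.filter fun w => (turanGraph n 2).Adj v w) =
        Finset.univ.filter (fun w : Fin n => w.val % 2 = 1) := by
      apply Finset.filter_congr; intro w _; rw [hadj w, h0]
      constructor
      · intro hw; omega
      · intro hw; omega
    rw [this, fin_parity_count, (parity_count n).2]
  · have h1 : v.val % 2 = 1 := Nat.odd_iff.mp h
    rw [if_neg (by omega)]
    have : (Finset.univ.filter fun w => (turanGraph n 2).Adj v w) =
        Finset.univ.filter (fun w : Fin n => w.val % 2 = 0) := by
      apply Finset.filter_congr; intro w _; rw [hadj w, h1]
      constructor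
      · intro hw; omega
      · intro hw; omega
    rw [this, fin_parity_count, (parity_count n).1]

lemma turan2_card_edges (n : ℕ) :
    2 * #(turanGraph n 2).edgeFinset = 2 * ((n + 1) / 2 * (n / 2)) := by
  classical
  rw [← SimpleGraph.sum_degrees_eq_twice_card_edges]
  have : ∀ v : Fin n, (turanGraph n 2).degree v =
      if v.val % 2 = 0 then n / 2 else (n + 1) / 2 := turan2_degree n
  rw [Finset.sum_congr rfl (fun v _ => this v), Finset.sum_ite]
  simp only [Finset.sum_const, smul_eq_mul]
  have e0 := (parity_count n).1
  have e1 := (parity_count n).2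
  rw [fin_parity_count n 0, e0]
  have : (Finset.univ.filter fun v : Fin n => ¬ v.val % 2 = 0) =
      Finset.univ.filter (fun v : Fin n => v.val % 2 = 1) := by
    apply Finset.filter_congr; intro v _; omega
  rw [this, fin_parity_count n 1, e1]
  ring_nf

/-- Mantel's theorem: every triangle-free graph on `n` vertices has at most `n²/4` edges. -/
theorem mantel (n : ℕ) (G : SimpleGraph (Fin n)) [DecidableRel G.Adj]
    (hG : G.CliqueFree 3) :
    (G.edgeFinset.card : ℝ) ≤ (n : ℝ) ^ 2 / 4 := by
  classical
  have hmax : (turanGraph n 2).IsTuranMaximal 2 := isTuranMaximal_turanGraph (by norm_num)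
  have hle : #G.edgeFinset ≤ #(turanGraph n 2).edgeFinset := hmax.2 hG
  have hcard := turan2_card_edges n
  have hT : #(turanGraph n 2).edgeFinset = (n + 1) / 2 * (n / 2) := by omega
  calc (G.edgeFinset.card : ℝ) ≤ (#(turanGraph n 2).edgeFinset : ℝ) := by exact_mod_cast hle
    _ = (((n + 1) / 2 : ℕ) : ℝ) * ((n / 2 : ℕ) : ℝ) := by rw [hT]; push_cast; ring
    _ ≤ (n : ℝ) ^ 2 / 4 := by
        have h1 : (((n + 1) / 2 : ℕ) : ℝ) * ((n / 2 : ℕ) : ℝ) * 4 ≤ (n : ℝ) ^ 2 := by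
          have := Nat.div_add_mod (n + 1) 2
          have := Nat.div_add_mod n 2
          have key : ((n + 1) / 2) * (n / 2) * 4 ≤ n ^ 2 := by
            rcases Nat.even_or_odd n with h | h
            · have : n % 2 = 0 := Nat.even_iff.mp h
              have h2 : (n + 1) / 2 = n / 2 := by omega
              have h3 : n = 2 * (n / 2) := by omega
              rw [h2]; nlinarith [Nat.div_add_mod n 2]
            · have : n % 2 = 1 := Nat.odd_iff.mp h
              have h2 : (n + 1) / 2 = n / 2 + 1 := by omega
              rw [h2]; nlinarith [Nat.div_add_mod n 2]
          exact_mod_cast key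
        linarith
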